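/- Let T, D be real with 4D - T² > 0 and a real. Suppose P : [M, ∞) → ℝ satisfies the integral characterization of the left Poincaré half-map with W(y) = Dy² - aTy + a² > 0 on ℝ. Then lim_{y₀→+∞} P(y₀)/y₀ = -exp(πT/√(4D - T²)). -/

import Mathlib

open Real Set Filter intervalIntegral

theorem halfmap_slope_at_infinity (a T D M c : ℝ) (h : 4 * D - T ^ 2 > 0)
    (W : ℝ → ℝ) (hW : ∀ y, W y = D * y ^ 2 - a * T * y + a ^ 2)
    (hWpos : ∀ y : ℝ, 0 < W y)
    (P : ℝ → ℝ)
    (hPneg : ∀ y₀ ≥ M, P y₀ < 0)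
    (hPbot : Tendsto P atTop atBot)
    (hc_pos : 0 < a → c = 0)
    (hc_neg : a < 0 → c = 2 * π / (D * Real.sqrt (4 * D - T ^ 2)))
    (hchar_ne : a ≠ 0 → ∀ y₀ ≥ M, (∫ y in P y₀..y₀, -y / W y) = c * T)
    (hchar_eq : a = 0 → ∀ y₀ ≥ M,
      P y₀ = -Real.exp (π * T / Real.sqrt (4 * D - T ^ 2)) * y₀) :
    Tendsto (fun y₀ => P y₀ / y₀) atTop
      (nhds (-Real.exp (π * T / Real.sqrt (4 * D - T ^ 2)))) := by
  have hWe : W = fun y => D * y ^ 2 - a * T * y + a ^ 2 := funext hW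
  subst hWe
  set K := Real.sqrt (4 * D - T ^ 2) with hKdef
  have hK : 0 < K := Real.sqrt_pos.mpr h
  have hK2 : K ^ 2 = 4 * D - T ^ 2 := Real.sq_sqrt h.le
  have hD : 0 < D := by nlinarith [sq_nonneg T]
  rcases eq_or_ne a 0 with ha | ha
  · -- easy case
    refine Tendsto.congr' ?_ tendsto_const_nhds
    filter_upwards [eventually_ge_atTop M, eventually_gt_atTop (0:ℝ)] with y hy hy0
    rw [hchar_eq ha y hy]
    field_simp
  · -- hard case
    obtain ⟨s, hs, hsdef⟩ : ∃ s : ℝ, 0 < s ∧ s = |a| * K :=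
      ⟨|a| * K, mul_pos (abs_pos.mpr ha) hK, rfl⟩
    have hs2 : s ^ 2 = a ^ 2 * (4 * D - T ^ 2) := by
      rw [hsdef, mul_pow, sq_abs, hK2]
    set Wf : ℝ → ℝ := fun y => D * y ^ 2 - a * T * y + a ^ 2 with hWf
    set G : ℝ → ℝ := fun y =>
      -(1 / (2 * D)) * Real.log (Wf y) + -(a * T / (D * s)) * Real.arctan ((2 * D * y - a * T) / s)
      with hG
    -- derivative of G
    have hGd : ∀ y : ℝ, HasDerivAt G (-y / Wf y) y := by
      intro y
      have hWy : 0 < Wf y := hWpos y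
      have hWd : HasDerivAt Wf (2 * D * y - a * T) y := by
        have h1 := (((hasDerivAt_pow 2 y).const_mul D).sub
          ((hasDerivAt_id y).const_mul (a*T))).add_const (a^2)
        refine h1.congr_deriv ?_
        norm_num
        ring
      have hlog : HasDerivAt (fun z => Real.log (Wf z)) ((2 * D * y - a * T) / Wf y) y :=
        hWd.log hWy.ne'
      have hu : HasDerivAt (fun z : ℝ => (2 * D * z - a * T) / s) (2 * D / s) y := by
        have h1 : HasDerivAt (fun z : ℝ => 2 * D * z - a * T) (2 * D) y := by
          simpa using ((hasDerivAt_id y).const_mul (2*D)).sub_const (a*T)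
        exact h1.div_const s
      have hat : HasDerivAt (fun z : ℝ => Real.arctan ((2 * D * z - a * T) / s))
          ((1 / (1 + ((2 * D * y - a * T) / s) ^ 2)) * (2 * D / s)) y :=
        (Real.hasDerivAt_arctan _).comp y hu
      have hsum : s ^ 2 + (2 * D * y - a * T) ^ 2 = 4 * D * Wf y := by
        rw [hs2, hWf]; ring
      have := (hlog.const_mul (-(1 / (2 * D)))).add (hat.const_mul (-(a * T / (D * s))))
      refine this.congr_deriv ?_
      have h1u : 1 + ((2 * D * y - a * T) / s) ^ 2 = 4 * D * Wf y / s ^ 2 := by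
        field_simp
        linarith [hsum]
      rw [h1u]
      field_simp
      ring
    -- FTC
    have hcont : Continuous fun y : ℝ => -y / Wf y :=
      (continuous_neg.comp continuous_id).div (by fun_prop) (fun y => (hWpos y).ne')
    have hGeq : ∀ y₀ ≥ M, G y₀ - G (P y₀) = c * T := by
      intro y₀ hy₀
      rw [← hchar_ne ha y₀ hy₀]
      rw [intervalIntegral.integral_eq_sub_of_hasDerivAt (fun x _ => hGd x)
        (hcont.intervalIntegrable _ _)]
    -- limits
    have hlogD : Tendsto (fun t : ℝ => Real.log (D - a * T * t + a ^ 2 * t ^ 2)) (nhds 0)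
        (nhds (Real.log D)) := by
      have hc : ContinuousAt (fun t : ℝ => Real.log (D - a * T * t + a ^ 2 * t ^ 2)) 0 := by
        apply Real.continuousAt_log ?_ |>.comp (by fun_prop)
        simpa using hD.ne'
      simpa using hc.tendsto
    have hWq : ∀ y : ℝ, y ≠ 0 → Wf y / y ^ 2 = D - a * T * y⁻¹ + a ^ 2 * (y⁻¹) ^ 2 := by
      intro y hy; rw [hWf]; field_simp
    have hWlog_top : Tendsto (fun y => Real.log (Wf y / y ^ 2)) atTop (nhds (Real.log D)) := by
      refine (hlogD.comp tendsto_inv_atTop_zero).congr' ?_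
      filter_upwards [eventually_gt_atTop (0:ℝ)] with y hy
      simp only [Function.comp_apply]
      rw [hWq y hy.ne']
    have hinv_bot : Tendsto (fun y : ℝ => y⁻¹) atBot (nhds 0) := by
      have h0 := (tendsto_inv_atTop_zero (𝕜 := ℝ)).comp tendsto_neg_atBot_atTop
      simpa [inv_neg] using h0.neg
    have hWlog_bot : Tendsto (fun y => Real.log (Wf y / y ^ 2)) atBot (nhds (Real.log D)) := by
      refine (hlogD.comp hinv_bot).congr' ?_
      filter_upwards [eventually_lt_atBot (0:ℝ)] with y hy
      simp only [Function.comp_apply]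
      rw [hWq y hy.ne]
    have hu_top : Tendsto (fun y : ℝ => (2 * D * y - a * T) / s) atTop atTop := by
      apply Tendsto.atTop_div_const hs
      have h1 : Tendsto (fun y : ℝ => 2 * D * y) atTop atTop :=
        Tendsto.const_mul_atTop (by positivity) tendsto_id
      simpa [sub_eq_add_neg] using tendsto_atTop_add_const_right atTop (-(a*T)) h1
    have hu_bot : Tendsto (fun y : ℝ => (2 * D * y - a * T) / s) atBot atBot := by
      apply Tendsto.atBot_div_const hs
      have h1 : Tendsto (fun y : ℝ => 2 * D * y) atBot atBot :=
        Tendsto.const_mul_atBot (by positivity) tendsto_id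
      simpa [sub_eq_add_neg] using tendsto_atBot_add_const_right atBot (-(a*T)) h1
    have hat_top : Tendsto (fun y : ℝ => Real.arctan ((2 * D * y - a * T) / s)) atTop
        (nhds (π / 2)) :=
      (Real.tendsto_arctan_atTop.mono_right nhdsWithin_le_nhds).comp hu_top
    have hat_bot : Tendsto (fun y : ℝ => Real.arctan ((2 * D * y - a * T) / s)) atBot
        (nhds (-(π / 2))) :=
      (Real.tendsto_arctan_atBot.mono_right nhdsWithin_le_nhds).comp hu_bot
    -- the combined limit
    have hlim : Tendsto (fun y₀ => D * c * T
        + (a * T / s) * (Real.arctan ((2 * D * y₀ - a * T) / s)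
            - Real.arctan ((2 * D * (P y₀) - a * T) / s))
        + (1 / 2) * (Real.log (Wf y₀ / y₀ ^ 2) - Real.log (Wf (P y₀) / (P y₀) ^ 2)))
        atTop (nhds (D * c * T + (a * T / s) * (π / 2 - -(π / 2))
          + (1 / 2) * (Real.log D - Real.log D))) := by
      exact (tendsto_const_nhds.add (((hat_top.sub (hat_bot.comp hPbot)).const_mul _))).add
        (((hWlog_top.sub (hWlog_bot.comp hPbot)).const_mul _))
    have hval : D * c * T + (a * T / s) * (π / 2 - -(π / 2))
        + (1 / 2) * (Real.log D - Real.log D) = π * T / K := by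
      rcases ha.lt_or_gt with hneg | hpos
      · rw [hc_neg hneg, hsdef, abs_of_neg hneg]
        have ha' : a ≠ 0 := ha
        field_simp
        ring
      · rw [hc_pos hpos, hsdef, abs_of_pos hpos]
        have ha' : a ≠ 0 := ha
        field_simp
        ring
    rw [hval] at hlim
    -- eventual identity
    have hident : ∀ᶠ y₀ in atTop, Real.log (-(P y₀) / y₀) = D * c * T
        + (a * T / s) * (Real.arctan ((2 * D * y₀ - a * T) / s)
            - Real.arctan ((2 * D * (P y₀) - a * T) / s))
        + (1 / 2) * (Real.log (Wf y₀ / y₀ ^ 2) - Real.log (Wf (P y₀) / (P y₀) ^ 2)) := by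
      filter_upwards [eventually_ge_atTop M, eventually_gt_atTop (0:ℝ)] with y₀ hy₀ hy0
      have hp : P y₀ < 0 := hPneg y₀ hy₀
      have hWy : (0:ℝ) < Wf y₀ := hWpos y₀
      have hWp : (0:ℝ) < Wf (P y₀) := hWpos (P y₀)
      have hge := hGeq y₀ hy₀
      simp only [hG] at hge
      have l1 : Real.log (Wf y₀ / y₀ ^ 2) = Real.log (Wf y₀) - 2 * Real.log y₀ := by
        rw [Real.log_div hWy.ne' (pow_ne_zero _ hy0.ne'), Real.log_pow]
        push_cast; ring
      have l2 : Real.log (Wf (P y₀) / (P y₀) ^ 2)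
          = Real.log (Wf (P y₀)) - 2 * Real.log (-(P y₀)) := by
        rw [Real.log_div hWp.ne' (pow_ne_zero _ hp.ne), show (P y₀)^2 = (-(P y₀))^2 by ring,
          Real.log_pow]
        push_cast; ring
      have l3 : Real.log (-(P y₀) / y₀) = Real.log (-(P y₀)) - Real.log y₀ :=
        Real.log_div (by linarith) hy0.ne'
      rw [l1, l2, l3]
      field_simp at hge
      have key2 : s * (Real.log (Wf (P y₀)) - Real.log (Wf y₀))
          - 2 * a * T * (Real.arctan ((2 * D * y₀ - a * T) / s)
            - Real.arctan ((2 * D * (P y₀) - a * T) / s)) - 2 * D * s * c * T = 0 := by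
        have h0 : D * (s * (Real.log (Wf (P y₀)) - Real.log (Wf y₀))
            - 2 * a * T * (Real.arctan ((2 * D * y₀ - a * T) / s)
              - Real.arctan ((2 * D * (P y₀) - a * T) / s)) - 2 * D * s * c * T) = 0 := by
          linear_combination D * hge
        exact (mul_eq_zero.mp h0).resolve_left hD.ne'
      have hs0 : s ≠ 0 := hs.ne'
      field_simp
      linear_combination (norm := ring_nf) key2
    have hlog_lim : Tendsto (fun y₀ => Real.log (-(P y₀) / y₀)) atTop (nhds (π * T / K)) :=
      hlim.congr' (by filter_upwards [hident] with y hy using hy.symm)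
    have hratio_pos : ∀ᶠ y₀ in atTop, 0 < -(P y₀) / y₀ := by
      filter_upwards [eventually_ge_atTop M, eventually_gt_atTop (0:ℝ)] with y₀ hy₀ hy0
      have hPn : P y₀ < 0 := hPneg y₀ hy₀
      exact div_pos (by linarith) hy0
    have hexp : Tendsto (fun y₀ => -(P y₀) / y₀) atTop (nhds (Real.exp (π * T / K))) := by
      have h1 := (Real.continuous_exp.tendsto _).comp hlog_lim
      refine h1.congr' ?_
      filter_upwards [hratio_pos] with y₀ hy
      simp [Real.exp_log hy]
    exact hexp.neg.congr (fun y => by ring)
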